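/- Let 𝒟 be a nonempty set of probability measures on ℝ satisfying tightness and the downward-directedness condition on CDFs (for all μ, μ̃ ∈ 𝒟 there exists ν ∈ 𝒟 with ν(−∞,t] ≤ min(μ(−∞,t], μ̃(−∞,t]) for all t). Then there exists a probability measure μ* on ℝ such that sup_{μ ∈ 𝒟} ∫ f dμ = ∫ f dμ* for every increasing, continuous, bounded function f : ℝ → ℝ. -/

import Mathlib

open MeasureTheory Set Filter Topology ENNReal

section helpers

lemma upper_ray {g : ℝ → ℝ} (hm : Monotone g) (hc : Continuous g) (t : ℝ) :
    {a | t < g a} = ∅ ∨ {a | t < g a} = univ ∨ ∃ u, {a | t < g a} = Ioi u := by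
  set S := {a | t < g a} with hS
  have hopen : IsOpen S := isOpen_lt continuous_const hc
  have hup : ∀ x ∈ S, ∀ y, x ≤ y → y ∈ S := fun x hx y hxy => lt_of_lt_of_le hx (hm hxy)
  rcases eq_empty_or_nonempty S with h | h
  · exact Or.inl h
  by_cases hb : BddBelow S
  · refine Or.inr (Or.inr ⟨sInf S, ?_⟩)
    apply Subset.antisymm
    · intro x hx
      rcases lt_or_eq_of_le (csInf_le hb hx) with h' | h'
      · exact h'
      · exfalso
        rcases Metric.isOpen_iff.1 hopen x hx with ⟨ε, hε, hball⟩
        have : x - ε/2 ∈ S := hball (by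
          simp only [Metric.mem_ball, Real.dist_eq]
          rw [abs_of_nonpos (by linarith)]; linarith)
        have := csInf_le hb this
        rw [← h'] at this; linarith
    · intro y hy
      obtain ⟨x, hx, hxy⟩ := (csInf_lt_iff hb h).1 hy
      exact hup x hx y hxy.le
  · refine Or.inr (Or.inl ?_)
    apply eq_univ_of_forall
    intro y
    rcases not_bddBelow_iff.1 hb y with ⟨x, hx, hxy⟩
    exact hup x hx y hxy.le

lemma toReal_Ioi (α : Measure ℝ) [IsProbabilityMeasure α] (v : ℝ) :
    (α (Ioi v)).toReal = 1 - (α (Iic v)).toReal := by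
  rw [← compl_Iic, measure_compl measurableSet_Iic (measure_ne_top _ _), measure_univ,
    ENNReal.toReal_sub_of_le prob_le_one one_ne_top, ENNReal.toReal_one]

lemma integrable_of_bdd {α : Measure ℝ} [IsFiniteMeasure α] {f : ℝ → ℝ} (hc : Continuous f)
    {C : ℝ} (hb : ∀ x, |f x| ≤ C) : Integrable f α := by
  refine ⟨hc.aestronglyMeasurable, ?_⟩
  apply MeasureTheory.HasFiniteIntegral.of_bounded (C := C)
  exact Eventually.of_forall fun x => by simpa using hb x

lemma layer (α : Measure ℝ) [IsProbabilityMeasure α] {g : ℝ → ℝ} (hc : Continuous g)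
    (g_nn : ∀ x, 0 ≤ g x) {B : ℝ} (g_le : ∀ x, g x ≤ B) :
    ∫ x, g x ∂α = ∫ t in Ioc 0 B, (α {a | t < g a}).toReal := by
  have hint : Integrable g α := integrable_of_bdd hc (C := B) fun x => by
    rw [abs_of_nonneg (g_nn x)]; exact g_le x
  rw [hint.integral_eq_integral_meas_lt (Eventually.of_forall g_nn)]
  simp only [measureReal_def]
  rw [setIntegral_eq_of_subset_of_ae_diff_eq_zero nullMeasurableSet_Ioi Ioc_subset_Ioi_self ?_]
  apply Eventually.of_forall fun t ht => ?_
  have htB : B < t := by simp_all only [mem_diff, mem_Ioi, mem_Ioc, not_and, not_le]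
  have : {a : ℝ | t < g a} = ∅ := by
    ext a; simp only [mem_setOf_eq, mem_empty_iff_false, iff_false, not_lt]
    exact (g_le a).trans htB.le
  simp [this]

lemma H_anti (α : Measure ℝ) [IsProbabilityMeasure α] (g : ℝ → ℝ) :
    Antitone (fun t => (α {a | t < g a}).toReal) := by
  intro s t hst
  exact ENNReal.toReal_mono (measure_ne_top _ _)
    (measure_mono fun a ha => lt_of_le_of_lt hst ha)

lemma H_le_one (α : Measure ℝ) [IsProbabilityMeasure α] (s : Set ℝ) : (α s).toReal ≤ 1 := by
  rw [← ENNReal.toReal_one]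
  exact ENNReal.toReal_mono one_ne_top prob_le_one

lemma H_intOn (α : Measure ℝ) [IsProbabilityMeasure α] (g : ℝ → ℝ) (a b : ℝ) :
    IntegrableOn (fun t => (α {a | t < g a}).toReal) (Ioc a b) := by
  have hmeas : Measurable (fun t => (α {a | t < g a}).toReal) := (H_anti α g).measurable
  haveI : IsFiniteMeasure ((volume : Measure ℝ).restrict (Ioc a b)) :=
    ⟨by rw [Measure.restrict_apply_univ]; exact (measure_Ioc_lt_top)⟩
  refine Integrable.mono' (integrable_const 1) hmeas.aestronglyMeasurable ?_
  apply Eventually.of_forall fun t => ?_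
  rw [Real.norm_eq_abs, abs_of_nonneg ENNReal.toReal_nonneg]
  exact H_le_one α _

lemma H_II (α : Measure ℝ) [IsProbabilityMeasure α] (g : ℝ → ℝ) (p q : ℝ) :
    IntervalIntegrable (fun t => (α {a | t < g a}).toReal) volume p q :=
  intervalIntegrable_iff.2 (H_intOn α g _ _)

lemma Hcomp {α β : Measure ℝ} [IsProbabilityMeasure α] [IsProbabilityMeasure β]
    (h : ∀ u, α (Iic u) ≤ β (Iic u)) {g : ℝ → ℝ} (hm : Monotone g) (hc : Continuous g) (t : ℝ) :
    (β {a | t < g a}).toReal ≤ (α {a | t < g a}).toReal := by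
  rcases upper_ray hm hc t with h1 | h1 | ⟨u, h1⟩ <;> rw [h1]
  · simp
  · simp [measure_univ]
  · rw [toReal_Ioi, toReal_Ioi]
    have := ENNReal.toReal_mono (measure_ne_top _ _) (h u)
    linarith

lemma integral_add_const (α : Measure ℝ) [IsProbabilityMeasure α] {f : ℝ → ℝ}
    (hf : Integrable f α) (c : ℝ) : ∫ x, (f x + c) ∂α = ∫ x, f x ∂α + c := by
  rw [integral_add hf (integrable_const c), integral_const, probReal_univ]; simp

end helpers


section
variable (D : Set (Measure ℝ))

noncomputable def Ginf (t : ℝ) : ℝ≥0∞ := ⨅ μ : D, (μ : Measure ℝ) (Iic t)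

lemma Ginf_le_one (hne : D.Nonempty) (hprob : ∀ μ ∈ D, IsProbabilityMeasure μ) (t : ℝ) : Ginf D t ≤ 1 := by
  obtain ⟨μ, hμ⟩ := hne
  haveI := hprob μ hμ
  exact le_trans (iInf_le _ ⟨μ, hμ⟩) prob_le_one

lemma Ginf_ne_top (hne : D.Nonempty) (hprob : ∀ μ ∈ D, IsProbabilityMeasure μ) (t : ℝ) : Ginf D t ≠ ⊤ :=
  ((Ginf_le_one D hne hprob t).trans_lt one_lt_top).ne

lemma Ginf_mono : Monotone (Ginf D) := fun s t hst =>
  iInf_mono fun μ => measure_mono (Iic_subset_Iic.2 hst)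

lemma exists_nu (hne : D.Nonempty) (hprob : ∀ μ ∈ D, IsProbabilityMeasure μ) (hdir : ∀ μ ∈ D, ∀ μ' ∈ D, ∃ ν ∈ D, ∀ t : ℝ,
      ν (Set.Iic t) ≤ min (μ (Set.Iic t)) (μ' (Set.Iic t)))
    (s : Finset ℝ) {ε : ℝ≥0∞} (hε : 0 < ε) :
    ∃ ν ∈ D, ∀ u ∈ s, ν (Iic u) ≤ Ginf D u + ε := by
  classical
  induction s using Finset.induction_on with
  | empty => exact ⟨hne.choose, hne.choose_spec, by simp⟩
  | @insert a s ha ih =>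
    obtain ⟨ν, hν, hνs⟩ := ih
    have hlt : Ginf D a < Ginf D a + ε :=
      ENNReal.lt_add_right (Ginf_ne_top D hne hprob a) hε.ne'
    obtain ⟨⟨μa, hμa⟩, hμa2⟩ := iInf_lt_iff.1 hlt
    obtain ⟨ν', hν', hν'le⟩ := hdir ν hν μa hμa
    refine ⟨ν', hν', fun u hu => ?_⟩
    rcases Finset.mem_insert.1 hu with rfl | hu
    · exact ((hν'le u).trans (min_le_right _ _)).trans hμa2.le
    · exact ((hν'le u).trans (min_le_left _ _)).trans (hνs u hu)
end

section
variable {D : Set (Measure ℝ)}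

noncomputable def Gr (D : Set (Measure ℝ)) (t : ℝ) : ℝ := (Ginf D t).toReal

lemma Gr_mono (hne : D.Nonempty) (hprob : ∀ μ ∈ D, IsProbabilityMeasure μ) :
    Monotone (Gr D) := fun s t hst =>
  ENNReal.toReal_mono (Ginf_ne_top D hne hprob t) (Ginf_mono D hst)

lemma Gr_le (hne : D.Nonempty) (hprob : ∀ μ ∈ D, IsProbabilityMeasure μ)
    {μ : Measure ℝ} (hμ : μ ∈ D) (t : ℝ) : Gr D t ≤ (μ (Iic t)).toReal := by
  haveI := hprob μ hμ
  exact ENNReal.toReal_mono (measure_ne_top _ _) (iInf_le _ (⟨μ, hμ⟩ : D))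

lemma Gr_nonneg (t : ℝ) : 0 ≤ Gr D t := ENNReal.toReal_nonneg

lemma Gr_le_one (hne : D.Nonempty) (hprob : ∀ μ ∈ D, IsProbabilityMeasure μ) (t : ℝ) :
    Gr D t ≤ 1 := by
  have := Ginf_le_one D hne hprob t
  calc Gr D t ≤ (1 : ℝ≥0∞).toReal := ENNReal.toReal_mono one_ne_top this
  _ = 1 := by simp

lemma Gr_right (hne : D.Nonempty) (hprob : ∀ μ ∈ D, IsProbabilityMeasure μ) (x : ℝ) :
    ContinuousWithinAt (Gr D) (Ici x) x := by
  rw [ContinuousWithinAt, Metric.tendsto_nhdsWithin_nhds]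
  intro e he
  have key : ∃ s, x < s ∧ Gr D s < Gr D x + e := by
    have hofr : (0:ℝ≥0∞) < ENNReal.ofReal (e/2) := by
      rw [ENNReal.ofReal_pos]; linarith
    have hlt : Ginf D x < Ginf D x + ENNReal.ofReal (e/2) :=
      ENNReal.lt_add_right (Ginf_ne_top D hne hprob x) hofr.ne'
    obtain ⟨⟨μ, hμ⟩, hμ2⟩ := iInf_lt_iff.1 hlt
    haveI := hprob μ hμ
    have hne' : Ginf D x + ENNReal.ofReal (e/2) ≠ ⊤ :=
      ENNReal.add_ne_top.2 ⟨Ginf_ne_top D hne hprob x, ofReal_ne_top⟩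
    have hμr : (μ (Iic x)).toReal < Gr D x + e/2 := by
      have := (ENNReal.toReal_lt_toReal (measure_ne_top _ _) hne').2 hμ2
      rwa [ENNReal.toReal_add (Ginf_ne_top D hne hprob x) ofReal_ne_top,
        ENNReal.toReal_ofReal (by linarith)] at this
    have hcdf : ∀ t, (μ (Iic t)).toReal = ProbabilityTheory.cdf μ t :=
      fun t => (ProbabilityTheory.cdf_eq_real μ t).symm
    have hrc : ContinuousWithinAt (ProbabilityTheory.cdf μ) (Ici x) x :=
      (ProbabilityTheory.cdf μ).right_continuous x
    have hev : ∀ᶠ t in 𝓝[Ici x] x, ProbabilityTheory.cdf μ t < Gr D x + e := by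
      have : Iio (Gr D x + e) ∈ 𝓝 (ProbabilityTheory.cdf μ x) := by
        apply Iio_mem_nhds
        rw [← hcdf]; linarith
      exact hrc this
    have hev' : ∀ᶠ t in 𝓝[Ioi x] x, ProbabilityTheory.cdf μ t < Gr D x + e :=
      hev.filter_mono (nhdsWithin_mono x Ioi_subset_Ici_self)
    obtain ⟨s, hs1, hs2⟩ := (hev'.and self_mem_nhdsWithin).exists
    refine ⟨s, hs2, ?_⟩
    calc Gr D s ≤ (μ (Iic s)).toReal := Gr_le hne hprob hμ s
    _ < Gr D x + e := by rw [hcdf]; exact hs1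
  obtain ⟨s, hxs, hse⟩ := key
  refine ⟨s - x, by linarith, fun y hy hdy => ?_⟩
  have hy' : x ≤ y := hy
  rw [Real.dist_eq, abs_of_nonneg (by linarith)] at hdy
  rw [Real.dist_eq, abs_of_nonneg (by linarith [Gr_mono hne hprob hy'])]
  have h1 : Gr D y ≤ Gr D s := Gr_mono hne hprob (by linarith)
  linarith
end

section
variable {D : Set (Measure ℝ)}

lemma compact_bounds {K : Set ℝ} (hK : IsCompact K) : ∃ M : ℝ, 0 < M ∧ K ⊆ Icc (-M) M := by
  obtain ⟨r, hr⟩ := hK.isBounded.subset_closedBall 0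
  refine ⟨|r| + 1, by positivity, fun x hx => ?_⟩
  have := hr hx
  simp only [Metric.mem_closedBall, Real.dist_eq, sub_zero] at this
  have h1 : |x| ≤ |r| + 1 := this.trans ((le_abs_self r).trans (by linarith))
  rw [abs_le] at h1; exact ⟨h1.1, h1.2⟩

lemma Gr_tendsto_atTop (hne : D.Nonempty) (hprob : ∀ μ ∈ D, IsProbabilityMeasure μ)
    (htight : ∀ ε : ℝ≥0∞, 0 < ε → ∃ K : Set ℝ, IsCompact K ∧ ∀ μ ∈ D, μ Kᶜ ≤ ε) :
    Tendsto (Gr D) atTop (𝓝 1) := by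
  rw [Metric.tendsto_nhds]
  intro e he
  rw [eventually_atTop]
  obtain ⟨K, hK, hKb⟩ := htight (ENNReal.ofReal (e/2)) (by rw [ENNReal.ofReal_pos]; linarith)
  obtain ⟨M, hM, hKM⟩ := compact_bounds hK
  refine ⟨M, fun t ht => ?_⟩
  have hGt : ∀ μ ∈ D, 1 - e/2 ≤ (μ (Iic t)).toReal := by
    intro μ hμ
    haveI := hprob μ hμ
    have hsub : Ioi t ⊆ Kᶜ := fun x hx hxK => by
      have := (hKM hxK).2; simp only [mem_Ioi] at hx; linarith
    have h1 : μ (Ioi t) ≤ ENNReal.ofReal (e/2) := (measure_mono hsub).trans (hKb μ hμ)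
    have h2 : (μ (Ioi t)).toReal ≤ e/2 := by
      refine ENNReal.toReal_le_of_le_ofReal (by linarith) h1
    have h3 : μ (Iic t) + μ (Ioi t) = 1 := by
      rw [← compl_Iic]
      rw [measure_add_measure_compl (μ := μ) (measurableSet_Iic : MeasurableSet (Iic t)), measure_univ]
    have h4 : (μ (Iic t)).toReal + (μ (Ioi t)).toReal = 1 := by
      rw [← ENNReal.toReal_add (measure_ne_top _ _) (measure_ne_top _ _), h3, ENNReal.toReal_one]
    linarith
  have hGr : 1 - e/2 ≤ Gr D t := by
    rcases le_or_gt (1 - e/2) 0 with h | h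
    · exact h.trans (Gr_nonneg t)
    have hofle : ENNReal.ofReal (1 - e/2) ≤ Ginf D t := by
      refine le_iInf fun ⟨μ, hμ⟩ => ?_
      exact ENNReal.ofReal_le_of_le_toReal (hGt μ hμ)
    have := ENNReal.toReal_mono (Ginf_ne_top D hne hprob t) hofle
    rwa [ENNReal.toReal_ofReal h.le] at this
  have := Gr_le_one hne hprob t
  rw [Real.dist_eq, abs_of_nonpos (by linarith)]
  linarith

end

lemma Gr_tendsto_atBot (hne : D.Nonempty) (hprob : ∀ μ ∈ D, IsProbabilityMeasure μ)
    (htight : ∀ ε : ℝ≥0∞, 0 < ε → ∃ K : Set ℝ, IsCompact K ∧ ∀ μ ∈ D, μ Kᶜ ≤ ε) :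
    Tendsto (Gr D) atBot (𝓝 0) := by
  rw [Metric.tendsto_nhds]
  intro e he
  rw [eventually_atBot]
  obtain ⟨K, hK, hKb⟩ := htight (ENNReal.ofReal (e/2)) (by rw [ENNReal.ofReal_pos]; linarith)
  obtain ⟨M, hM, hKM⟩ := compact_bounds hK
  refine ⟨-M - 1, fun t ht => ?_⟩
  obtain ⟨μ, hμ⟩ := hne
  haveI := hprob μ hμ
  have hsub : Iic t ⊆ Kᶜ := fun x hx hxK => by
    have := (hKM hxK).1; simp only [mem_Iic] at hx; linarith
  have h1 : μ (Iic t) ≤ ENNReal.ofReal (e/2) := (measure_mono hsub).trans (hKb μ hμ)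
  have h2 : (μ (Iic t)).toReal ≤ e/2 := ENNReal.toReal_le_of_le_ofReal (by linarith) h1
  have h3 : Gr D t ≤ e/2 := (Gr_le ⟨μ, hμ⟩ hprob hμ t).trans h2
  rw [Real.dist_eq, sub_zero, abs_of_nonneg (Gr_nonneg t)]
  linarith

theorem sup_integral_attained (D : Set (Measure ℝ)) (hne : D.Nonempty)
    (hprob : ∀ μ ∈ D, IsProbabilityMeasure μ)
    (htight : ∀ ε : ℝ≥0∞, 0 < ε → ∃ K : Set ℝ, IsCompact K ∧ ∀ μ ∈ D, μ Kᶜ ≤ ε)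
    (hdir : ∀ μ ∈ D, ∀ μ' ∈ D, ∃ ν ∈ D, ∀ t : ℝ,
      ν (Set.Iic t) ≤ min (μ (Set.Iic t)) (μ' (Set.Iic t))) :
    ∃ μstar : Measure ℝ, IsProbabilityMeasure μstar ∧
      ∀ f : ℝ → ℝ, Monotone f → Continuous f → (∃ C : ℝ, ∀ x, |f x| ≤ C) →
        (⨆ μ : D, ∫ x, f x ∂(μ : Measure ℝ)) = ∫ x, f x ∂μstar := by
  classical
  set SF : StieltjesFunction ℝ :=
    ⟨Gr D, Gr_mono hne hprob, fun x => Gr_right hne hprob x⟩ with hSF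
  have hbot : Tendsto SF atBot (𝓝 0) := Gr_tendsto_atBot hne hprob htight
  have htop : Tendsto SF atTop (𝓝 1) := Gr_tendsto_atTop hne hprob htight
  set μstar : Measure ℝ := SF.measure with hμstar
  haveI hPμstar : IsProbabilityMeasure μstar := SF.isProbabilityMeasure hbot htop
  have hIicR : ∀ t : ℝ, (μstar (Iic t)).toReal = Gr D t := by
    intro t
    rw [hμstar, SF.measure_Iic hbot t]
    simp only [sub_zero]
    exact ENNReal.toReal_ofReal (Gr_nonneg t)
  have hIic : ∀ t : ℝ, μstar (Iic t) = Ginf D t := by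
    intro t
    rw [hμstar, SF.measure_Iic hbot t]
    simp only [sub_zero]
    exact ENNReal.ofReal_toReal (Ginf_ne_top D hne hprob t)
  have hIic_le : ∀ μ ∈ D, ∀ t : ℝ, μstar (Iic t) ≤ μ (Iic t) := by
    intro μ hμ t
    rw [hIic t]
    exact iInf_le _ (⟨μ, hμ⟩ : D)
  refine ⟨μstar, hPμstar, ?_⟩
  intro f hmono hcont hbC
  obtain ⟨C, hC⟩ := hbC
  have hC0 : 0 ≤ C := le_trans (abs_nonneg _) (hC 0)
  set C' : ℝ := C + 1 with hC'
  set B : ℝ := 2 * C' with hB'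
  have hB : 0 < B := by simp only [hB', hC']; linarith
  set g : ℝ → ℝ := fun x => f x + C' with hg
  have hgmono : Monotone g := fun x y hxy => by
    simp only [hg]; exact add_le_add_left (hmono hxy) C'
  have hgcont : Continuous g := hcont.add continuous_const
  have g_nn : ∀ x, 0 ≤ g x := fun x => by
    have := (abs_le.1 (hC x)).1; simp only [hg, hC']; linarith
  have g_le : ∀ x, g x ≤ B := fun x => by
    have := (abs_le.1 (hC x)).2; simp only [hg, hB', hC']; linarith
  have hfint : ∀ (α : Measure ℝ), IsProbabilityMeasure α → Integrable f α := by
    intro α hα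
    haveI := hα
    exact integrable_of_bdd hcont hC
  have hfg : ∀ (α : Measure ℝ), IsProbabilityMeasure α →
      ∫ x, g x ∂α = ∫ x, f x ∂α + C' := by
    intro α hα
    haveI := hα
    exact integral_add_const α (hfint α hα) C'
  -- part 1
  have key1 : ∀ μ ∈ D, ∫ x, f x ∂μ ≤ ∫ x, f x ∂μstar := by
    intro μ hμ
    haveI := hprob μ hμ
    have hgle : ∫ x, g x ∂μ ≤ ∫ x, g x ∂μstar := by
      rw [layer μ hgcont g_nn g_le, layer μstar hgcont g_nn g_le]
      refine setIntegral_mono_on (H_intOn μ g 0 B) (H_intOn μstar g 0 B) measurableSet_Ioc ?_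
      intro t ht
      exact Hcomp (hIic_le μ hμ) hgmono hgcont t
    rw [hfg μ (hprob μ hμ), hfg μstar hPμstar] at hgle
    linarith
  -- part 2
  have key2 : ∀ δ : ℝ, 0 < δ → ∃ ν ∈ D, ∫ x, f x ∂μstar ≤ ∫ x, f x ∂ν + δ := by
    intro δ hδ
    set e : ℝ := δ / (2 * B) with he'
    have he : 0 < e := by positivity
    set n : ℕ := ⌈2 * B / δ⌉₊ + 1 with hn'
    have hn0 : 0 < n := Nat.succ_pos _
    have hnR : (0:ℝ) < n := by exact_mod_cast hn0
    set a : ℕ → ℝ := fun j => j * (B / n) with ha'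
    have ha0 : a 0 = 0 := by simp [ha']
    have han : a n = B := by
      simp only [ha']; field_simp
    have hastep : ∀ j : ℕ, a (j+1) - a j = B / n := by
      intro j; simp only [ha']; push_cast; ring
    have hamono : ∀ j : ℕ, a j ≤ a (j+1) := by
      intro j
      have h1 : 0 < B / n := by positivity
      have := hastep j; linarith
    have hu : ∀ j : ℕ, ∃ v : ℝ,
        {x | a j < g x} = ∅ ∨ {x | a j < g x} = univ ∨ {x | a j < g x} = Ioi v := by
      intro j
      rcases upper_ray hgmono hgcont (a j) with h | h | ⟨u, h⟩
      · exact ⟨0, Or.inl h⟩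
      · exact ⟨0, Or.inr (Or.inl h)⟩
      · exact ⟨u, Or.inr (Or.inr h)⟩
    choose u hu using hu
    obtain ⟨ν, hν, hνF⟩ := exists_nu D hne hprob hdir ((Finset.range (n+1)).image u)
      (ENNReal.ofReal_pos.2 he)
    haveI := hprob ν hν
    have hgrid : ∀ j : ℕ, j ≤ n →
        (μstar {x | a j < g x}).toReal ≤ (ν {x | a j < g x}).toReal + e := by
      intro j hj
      rcases hu j with h | h | h <;> rw [h]
      · simp [he.le]
      · simp only [measure_univ, ENNReal.toReal_one]; linarith
      · have huF : u j ∈ (Finset.range (n+1)).image u :=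
          Finset.mem_image_of_mem u (Finset.mem_range.2 (Nat.lt_succ_of_le hj))
        have h1 : ν (Iic (u j)) ≤ Ginf D (u j) + ENNReal.ofReal e := hνF (u j) huF
        have h2 : (ν (Iic (u j))).toReal ≤ Gr D (u j) + e := by
          have hfin : Ginf D (u j) + ENNReal.ofReal e ≠ ⊤ :=
            ENNReal.add_ne_top.2 ⟨Ginf_ne_top D hne hprob _, ofReal_ne_top⟩
          have := ENNReal.toReal_mono hfin h1
          rwa [ENNReal.toReal_add (Ginf_ne_top D hne hprob _) ofReal_ne_top,
            ENNReal.toReal_ofReal he.le] at this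
        rw [toReal_Ioi μstar, toReal_Ioi ν, hIicR]
        linarith
    -- pointwise piece bound
    have hpiece : ∀ j : ℕ, j < n → ∀ t ∈ Icc (a j) (a (j+1)),
        (μstar {x | t < g x}).toReal - (ν {x | t < g x}).toReal ≤
          (ν {x | a j < g x}).toReal + e - (ν {x | a (j+1) < g x}).toReal := by
      intro j hj t ht
      have h1 : (μstar {x | t < g x}).toReal ≤ (μstar {x | a j < g x}).toReal :=
        H_anti μstar g ht.1
      have h2 : (ν {x | a (j+1) < g x}).toReal ≤ (ν {x | t < g x}).toReal :=
        H_anti ν g ht.2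
      have h3 := hgrid j hj.le
      linarith
    have hIIsub : ∀ p q : ℝ, IntervalIntegrable
        (fun t => (μstar {x | t < g x}).toReal - (ν {x | t < g x}).toReal) volume p q :=
      fun p q => (H_II μstar g p q).sub (H_II ν g p q)
    have L1 : ∫ x, g x ∂μstar - ∫ x, g x ∂ν =
        ∫ t in (0:ℝ)..B, ((μstar {x | t < g x}).toReal - (ν {x | t < g x}).toReal) := by
      rw [layer μstar hgcont g_nn g_le, layer ν hgcont g_nn g_le,
        ← intervalIntegral.integral_of_le hB.le, ← intervalIntegral.integral_of_le hB.le,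
        ← intervalIntegral.integral_sub (H_II μstar g 0 B) (H_II ν g 0 B)]
    have L2 : ∫ t in (0:ℝ)..B, ((μstar {x | t < g x}).toReal - (ν {x | t < g x}).toReal) =
        ∑ j ∈ Finset.range n, ∫ t in a j..a (j+1),
          ((μstar {x | t < g x}).toReal - (ν {x | t < g x}).toReal) := by
      rw [intervalIntegral.sum_integral_adjacent_intervals (fun k _ => hIIsub (a k) (a (k+1))),
        ha0, han]
    have L3 : ∀ j ∈ Finset.range n, (∫ t in a j..a (j+1),
          ((μstar {x | t < g x}).toReal - (ν {x | t < g x}).toReal)) ≤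
        (B/n) * ((ν {x | a j < g x}).toReal + e - (ν {x | a (j+1) < g x}).toReal) := by
      intro j hj
      have hjn := Finset.mem_range.1 hj
      have hmon := intervalIntegral.integral_mono_on (hamono j) (hIIsub (a j) (a (j+1)))
        (intervalIntegrable_const) (hpiece j hjn)
      rw [intervalIntegral.integral_const, hastep j, smul_eq_mul] at hmon
      exact hmon
    have L4 : ∑ j ∈ Finset.range n,
        (B/n) * ((ν {x | a j < g x}).toReal + e - (ν {x | a (j+1) < g x}).toReal) =
        (B/n) * (((ν {x | a 0 < g x}).toReal - (ν {x | a n < g x}).toReal) + n * e) := by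
      rw [← Finset.mul_sum]
      congr 1
      have hsum : ∑ j ∈ Finset.range n,
          ((ν {x | a j < g x}).toReal - (ν {x | a (j+1) < g x}).toReal) =
          (ν {x | a 0 < g x}).toReal - (ν {x | a n < g x}).toReal :=
        Finset.sum_range_sub' (fun j => (ν {x | a j < g x}).toReal) n
      calc ∑ j ∈ Finset.range n,
            ((ν {x | a j < g x}).toReal + e - (ν {x | a (j+1) < g x}).toReal)
          = ∑ j ∈ Finset.range n,
            (((ν {x | a j < g x}).toReal - (ν {x | a (j+1) < g x}).toReal) + e) := by
            apply Finset.sum_congr rfl; intro j _; ring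
        _ = (((ν {x | a 0 < g x}).toReal - (ν {x | a n < g x}).toReal) + n * e) := by
            rw [Finset.sum_add_distrib, hsum, Finset.sum_const, Finset.card_range,
              nsmul_eq_mul]
    have hbound1 : (ν {x | a 0 < g x}).toReal - (ν {x | a n < g x}).toReal ≤ 1 := by
      have := H_le_one ν {x | a 0 < g x}
      have := ENNReal.toReal_nonneg (a := ν {x | a n < g x})
      linarith
    have hBn : B / n ≤ δ / 2 := by
      have hceil : 2 * B / δ ≤ (n : ℝ) := by
        rw [hn']; push_cast
        have := Nat.le_ceil (2 * B / δ)
        linarith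
      rw [div_le_div_iff₀ hnR (by norm_num : (0:ℝ) < 2)]
      have h2 : 2 * B ≤ δ * n := by
        rw [div_le_iff₀ hδ] at hceil; linarith
      linarith
    have hBe : B * e = δ / 2 := by
      rw [he']; field_simp
    have hfinal : ∫ x, g x ∂μstar - ∫ x, g x ∂ν ≤ δ := by
      rw [L1, L2]
      calc ∑ j ∈ Finset.range n, ∫ t in a j..a (j+1),
            ((μstar {x | t < g x}).toReal - (ν {x | t < g x}).toReal)
          ≤ ∑ j ∈ Finset.range n,
            (B/n) * ((ν {x | a j < g x}).toReal + e - (ν {x | a (j+1) < g x}).toReal) :=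
            Finset.sum_le_sum L3
        _ = (B/n) * (((ν {x | a 0 < g x}).toReal - (ν {x | a n < g x}).toReal) + n * e) := L4
        _ ≤ (B/n) * (1 + n * e) := by
            apply mul_le_mul_of_nonneg_left _ (by positivity)
            linarith
        _ = B/n + (B/n) * (n * e) := by ring
        _ = B/n + B * e := by field_simp
        _ ≤ δ/2 + δ/2 := by rw [hBe]; linarith
        _ = δ := by ring
    refine ⟨ν, hν, ?_⟩
    rw [hfg μstar hPμstar, hfg ν (hprob ν hν)] at hfinal
    linarith
  -- assemble
  haveI : Nonempty D := hne.to_subtype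
  have hbdd : BddAbove (range fun μ : D => ∫ x, f x ∂(μ : Measure ℝ)) := by
    refine ⟨∫ x, f x ∂μstar, ?_⟩
    rintro y ⟨⟨μ, hμ⟩, rfl⟩
    exact key1 μ hμ
  apply le_antisymm
  · exact ciSup_le fun μ => key1 μ μ.2
  · refine le_of_forall_pos_le_add fun δ hδ => ?_
    obtain ⟨ν, hν, hνle⟩ := key2 δ hδ
    calc ∫ x, f x ∂μstar ≤ ∫ x, f x ∂ν + δ := hνle
      _ ≤ (⨆ μ : D, ∫ x, f x ∂(μ : Measure ℝ)) + δ :=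
          add_le_add_left (le_ciSup hbdd (⟨ν, hν⟩ : D)) δ
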